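/- For sets A, B ⊆ ℕ, the sets A and B are separable by some rotation if and only if the difference set A − B = {a − b : a ∈ A, b ∈ B} is not a set of Bohr recurrence. -/

import Mathlib

/-- Two sets `A, B ⊆ ℕ` are separable by some rotation if there are `d ∈ ℕ` and
`α ∈ (ℝ/ℤ)^d` such that the closures of `Aα` and `Bα` in `(ℝ/ℤ)^d` are disjoint. -/
def SeparableByRotation (A B : Set ℕ) : Prop :=
  ∃ (d : ℕ) (α : Fin d → AddCircle (1 : ℝ)),
    Disjoint (closure ((fun a : ℕ => a • α) '' A)) (closure ((fun b : ℕ => b • α) '' B))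

/-- A set `R ⊆ ℤ` is a set of Bohr recurrence if for every `d`, every `α ∈ ℝ^d`
and every `ε > 0`, there is `r ∈ R` such that every coordinate of `rα` is within
`ε` of an integer. -/
def BohrRecurrenceZ (R : Set ℤ) : Prop :=
  ∀ (d : ℕ) (α : Fin d → ℝ) (ε : ℝ), 0 < ε →
    ∃ r ∈ R, ∀ i : Fin d, ∃ k : ℤ, |(r : ℝ) * α i - (k : ℝ)| < ε

lemma round_min_aux (x : ℝ) (k : ℤ) : |x - round x| ≤ |x - k| := by
  have h1 : x - (round x : ℝ) = (x - k) - round (x - (k : ℝ)) := by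
    rw [round_sub_intCast]; push_cast; ring
  rw [h1]
  set y := x - (k : ℝ) with hy
  rcases le_or_gt (1/2) |y| with h | h
  · exact (abs_sub_round y).trans h
  · have hy' := abs_lt.mp h
    have h0 : round y = 0 := by
      rw [round_eq, Int.floor_eq_zero_iff, Set.mem_Ico]
      constructor <;> linarith [hy'.1, hy'.2]
    simp [h0]

lemma norm_addCircle_lt_iff {x ε : ℝ} :
    ‖(x : AddCircle (1 : ℝ))‖ < ε ↔ ∃ k : ℤ, |x - (k : ℝ)| < ε := by
  have hnorm : ‖(x : AddCircle (1 : ℝ))‖ = |x - round x| := by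
    rw [AddCircle.norm_eq]; norm_num
  constructor
  · intro h; exact ⟨round x, by rwa [hnorm] at h⟩
  · rintro ⟨k, hk⟩; rw [hnorm]; exact lt_of_le_of_lt (round_min_aux x k) hk

lemma smul_coe_addCircle (a : ℕ) (x : ℝ) :
    a • ((x : AddCircle (1 : ℝ))) = (((a : ℝ) * x : ℝ) : AddCircle (1 : ℝ)) := by
  rw [← AddCircle.coe_nsmul, nsmul_eq_mul]

lemma diff_smul_coe (a b : ℕ) (x : ℝ) :
    a • ((x : AddCircle (1 : ℝ))) - b • ((x : AddCircle (1 : ℝ)))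
      = ((((a : ℤ) - b : ℤ) : ℝ) * x : ℝ) := by
  rw [smul_coe_addCircle, smul_coe_addCircle, ← AddCircle.coe_sub]
  push_cast
  ring_nf

/-- `A` and `B` are separable by some rotation iff `A - B` is not a set of Bohr
recurrence. -/
theorem separable_iff_difference_not_bohr (A B : Set ℕ) :
    SeparableByRotation A B ↔
      ¬ BohrRecurrenceZ {z : ℤ | ∃ a ∈ A, ∃ b ∈ B, z = (a : ℤ) - (b : ℤ)} := by
  set R : Set ℤ := {z : ℤ | ∃ a ∈ A, ∃ b ∈ B, z = (a : ℤ) - (b : ℤ)} with hR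
  constructor
  · rintro ⟨d, α, hdisj⟩
    -- choose real lifts of α
    have hsurj : ∀ i, ∃ x : ℝ, (x : AddCircle (1 : ℝ)) = α i := fun i =>
      QuotientAddGroup.mk_surjective (α i)
    choose β hβ using hsurj
    rcases A.eq_empty_or_nonempty with hA | hA
    · intro hB
      obtain ⟨r, hr, -⟩ := hB 0 (fun _ => 0) 1 one_pos
      obtain ⟨a, ha, -⟩ := hr
      simp [hA] at ha
    rcases B.eq_empty_or_nonempty with hBe | hBe
    · intro hB
      obtain ⟨r, hr, -⟩ := hB 0 (fun _ => 0) 1 one_pos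
      obtain ⟨a, -, b, hb, -⟩ := hr
      simp [hBe] at hb
    -- both nonempty: get a positive gap
    have hK1 : IsCompact (closure ((fun a : ℕ => a • α) '' A)) :=
      isClosed_closure.isCompact
    obtain ⟨δ, hδ, hthick⟩ := hdisj.exists_thickenings hK1 isClosed_closure
    have hgap : ∀ a ∈ A, ∀ b ∈ B, δ ≤ dist ((a : ℕ) • α) ((b : ℕ) • α) := by
      intro a ha b hb
      by_contra hlt
      push_neg at hlt
      have h1 : (b : ℕ) • α ∈ Metric.thickening δ
          (closure ((fun a : ℕ => a • α) '' A)) := by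
        rw [Metric.mem_thickening_iff]
        exact ⟨a • α, subset_closure ⟨a, ha, rfl⟩, by rwa [dist_comm]⟩
      have h2 : (b : ℕ) • α ∈ Metric.thickening δ
          (closure ((fun b : ℕ => b • α) '' B)) := by
        rw [Metric.mem_thickening_iff]
        exact ⟨b • α, subset_closure ⟨b, hb, rfl⟩, by simpa using hδ⟩
      exact (hthick.ne_of_mem h1 h2) rfl
    intro hB
    obtain ⟨r, hrR, hr⟩ := hB d β δ hδ
    obtain ⟨a, ha, b, hb, rfl⟩ := hrR
    have hcoord : ∀ i, dist ((a • α) i) ((b • α) i) < δ := by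
      intro i
      rw [Pi.smul_apply, Pi.smul_apply, dist_eq_norm, ← hβ i, diff_smul_coe]
      exact norm_addCircle_lt_iff.mpr (hr i)
    have : dist ((a : ℕ) • α) ((b : ℕ) • α) < δ :=
      (dist_pi_lt_iff hδ).mpr hcoord
    exact absurd this (not_lt.mpr (hgap a ha b hb))
  · intro hB
    rw [BohrRecurrenceZ] at hB
    push_neg at hB
    obtain ⟨d, β, ε, hε, hkey⟩ := hB
    refine ⟨d, fun i => ((β i : ℝ) : AddCircle (1 : ℝ)), ?_⟩
    rw [Set.disjoint_left]
    intro x hx1 hx2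
    obtain ⟨y1, hy1, hd1⟩ := Metric.mem_closure_iff.mp hx1 (ε/2) (by linarith)
    obtain ⟨y2, hy2, hd2⟩ := Metric.mem_closure_iff.mp hx2 (ε/2) (by linarith)
    obtain ⟨a, ha, rfl⟩ := hy1
    obtain ⟨b, hb, rfl⟩ := hy2
    have hrR : ((a : ℤ) - b) ∈ R := ⟨a, ha, b, hb, rfl⟩
    obtain ⟨i, hi⟩ := hkey _ hrR
    have hdi : dist ((a • fun i => ((β i : ℝ) : AddCircle (1:ℝ))) i)
        ((b • fun i => ((β i : ℝ) : AddCircle (1:ℝ))) i) < ε := by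
      calc dist ((a • fun i => ((β i : ℝ) : AddCircle (1:ℝ))) i)
            ((b • fun i => ((β i : ℝ) : AddCircle (1:ℝ))) i)
          ≤ dist (a • fun i => ((β i : ℝ) : AddCircle (1:ℝ)))
            (b • fun i => ((β i : ℝ) : AddCircle (1:ℝ))) := dist_le_pi_dist _ _ i
        _ ≤ dist (a • fun i => ((β i : ℝ) : AddCircle (1:ℝ))) x
            + dist x (b • fun i => ((β i : ℝ) : AddCircle (1:ℝ))) := dist_triangle _ _ _
        _ < ε/2 + ε/2 := by
            rw [dist_comm (a • fun i => ((β i : ℝ) : AddCircle (1:ℝ))) x]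
            exact add_lt_add hd1 hd2
        _ = ε := by ring
    rw [Pi.smul_apply, Pi.smul_apply, dist_eq_norm, diff_smul_coe] at hdi
    obtain ⟨k, hk⟩ := norm_addCircle_lt_iff.mp hdi
    exact absurd hk (not_lt.mpr (hi k))
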